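/- Let S = {v₁, …, vₙ} ⊆ ℤ^g be a finite set and suppose v₁ ≠ v₂ are both ℤ^g-coloops of S. Then there is a ℤ-basis v₁, v₂, w₃, …, w_g of ℤ^g such that every element of S ∖ {v₁, v₂} lies in the ℤ-linear span of w₃, …, w_g. -/

import Mathlib

/-- `v` is a `ℤ^g`-coloop of `S ⊆ ℤ^g`: there is a `ℤ`-basis of `ℤ^g` containing `v`
such that every other element of `S` lies in the `ℤ`-span of the remaining basis
vectors. -/
def IsZColoop {g : ℕ} (S : Set (Fin g → ℤ)) (v : Fin g → ℤ) : Prop :=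
  ∃ (b : Module.Basis (Fin g) ℤ (Fin g → ℤ)) (i₀ : Fin g), b i₀ = v ∧
    ∀ w ∈ S, w ≠ v → w ∈ Submodule.span ℤ (b '' {i | i ≠ i₀})

/-- If `v₁ ≠ v₂` are both `ℤ^g`-coloops of a finite set `S ⊆ ℤ^g`, then
there is a `ℤ`-basis of `ℤ^g` containing both `v₁` and `v₂` such that every element of
`S ∖ {v₁, v₂}` lies in the `ℤ`-span of the remaining basis vectors. -/
lemma span_compl_eq_ker {g : ℕ} (b : Module.Basis (Fin g) ℤ (Fin g → ℤ)) (i₀ : Fin g) :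
    Submodule.span ℤ (b '' {i | i ≠ i₀}) = LinearMap.ker (b.coord i₀) := by
  ext x
  rw [Module.Basis.mem_span_image, LinearMap.mem_ker, Module.Basis.coord_apply]
  constructor
  · intro h
    by_contra hx
    exact absurd (h (Finsupp.mem_support_iff.2 hx)) (by simp)
  · intro h i hi
    simp only [Set.mem_setOf_eq]
    rintro rfl
    exact (Finsupp.mem_support_iff.1 hi) h

theorem two_coloops_common_basis
    {g : ℕ} (S : Set (Fin g → ℤ)) (hS : S.Finite)
    (v₁ v₂ : Fin g → ℤ) (h1 : v₁ ∈ S) (h2 : v₂ ∈ S) (hne : v₁ ≠ v₂)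
    (hc1 : IsZColoop S v₁) (hc2 : IsZColoop S v₂) :
    ∃ (b : Module.Basis (Fin g) ℤ (Fin g → ℤ)) (i₁ i₂ : Fin g), i₁ ≠ i₂ ∧
      b i₁ = v₁ ∧ b i₂ = v₂ ∧
      ∀ w ∈ S, w ≠ v₁ → w ≠ v₂ →
        w ∈ Submodule.span ℤ (b '' {i | i ≠ i₁ ∧ i ≠ i₂}) := by
  obtain ⟨b, i₀, hb, hspan1⟩ := hc1
  obtain ⟨c, j₀, hcc, hspan2⟩ := hc2
  set φ₁ := b.coord i₀ with hφ₁def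
  set φ₂ := c.coord j₀ with hφ₂def
  have hM1 : ∀ w ∈ S, w ≠ v₁ → φ₁ w = 0 := by
    intro w hw hwne
    have := hspan1 w hw hwne
    rw [span_compl_eq_ker] at this
    exact this
  have hM2 : ∀ w ∈ S, w ≠ v₂ → φ₂ w = 0 := by
    intro w hw hwne
    have := hspan2 w hw hwne
    rw [span_compl_eq_ker] at this
    exact this
  have hφ₁v₁ : φ₁ v₁ = 1 := by rw [← hb]; simp [hφ₁def]
  have hφ₂v₂ : φ₂ v₂ = 1 := by rw [← hcc]; simp [hφ₂def]
  have hφ₁v₂ : φ₁ v₂ = 0 := hM1 v₂ h2 (Ne.symm hne)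
  have hφ₂v₁ : φ₂ v₁ = 0 := hM2 v₁ h1 hne
  set N := LinearMap.ker φ₁ ⊓ LinearMap.ker φ₂ with hNdef
  set n := Module.Free.chooseBasis ℤ N with hndef
  set f : (Fin 2 ⊕ Module.Free.ChooseBasisIndex ℤ N) → (Fin g → ℤ) :=
    Sum.elim ![v₁, v₂] (fun i => ((n i : Fin g → ℤ))) with hfdef
  -- span of the N-part
  have hspanN : Submodule.span ℤ (Set.range fun i => ((n i : Fin g → ℤ))) = N := by
    have hr : (Set.range fun i => ((n i : Fin g → ℤ))) = N.subtype '' Set.range n := by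
      ext x; simp [Set.range_comp]
    rw [hr, ← Submodule.map_span, n.span_eq, Submodule.map_top, Submodule.range_subtype]
  have hpair : LinearIndependent ℤ ![v₁, v₂] := by
    rw [Fintype.linearIndependent_iff]
    intro a ha
    rw [Fin.sum_univ_two] at ha
    have h1' := congrArg φ₁ ha
    have h2' := congrArg φ₂ ha
    simp only [map_add, map_smul, hφ₁v₁, hφ₁v₂, hφ₂v₁, hφ₂v₂, map_zero, smul_eq_mul,
      mul_one, mul_zero, add_zero, zero_add] at h1' h2'
    intro i
    fin_cases i <;> simp_all [Matrix.cons_val_zero, Matrix.cons_val_one]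
  have hnli : LinearIndependent ℤ (fun i => ((n i : Fin g → ℤ))) :=
    n.linearIndependent.map' N.subtype N.ker_subtype
  have hdisj : Disjoint (Submodule.span ℤ (Set.range ![v₁, v₂]))
      (Submodule.span ℤ (Set.range fun i => ((n i : Fin g → ℤ)))) := by
    rw [hspanN, Submodule.disjoint_def]
    intro x hx hxN
    have hr2 : Set.range ![v₁, v₂] = {v₁, v₂} := by
      ext y; simp [Matrix.range_cons, Matrix.range_empty, or_comm]
    rw [hr2] at hx
    obtain ⟨a, b', hab⟩ := Submodule.mem_span_pair.1 hx
    have hx1 : φ₁ x = 0 := hxN.1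
    have hx2 : φ₂ x = 0 := hxN.2
    have e1 : a = 0 := by
      have h := congrArg φ₁ hab
      rw [map_add, map_smul, map_smul, hφ₁v₁, hφ₁v₂, hx1, smul_eq_mul, smul_eq_mul] at h
      linarith
    have e2 : b' = 0 := by
      have h := congrArg φ₂ hab
      rw [map_add, map_smul, map_smul, hφ₂v₁, hφ₂v₂, hx2, smul_eq_mul, smul_eq_mul] at h
      linarith
    rw [e1, e2] at hab
    simpa using hab.symm
  have hli : LinearIndependent ℤ f := hpair.sum_type hnli hdisj
  have hsp : ⊤ ≤ Submodule.span ℤ (Set.range f) := by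
    intro x _
    have k1 : φ₁ (x - φ₁ x • v₁ - φ₂ x • v₂) = 0 := by
      rw [map_sub, map_sub, map_smul, map_smul, hφ₁v₁, hφ₁v₂, smul_eq_mul, smul_eq_mul]; ring
    have k2 : φ₂ (x - φ₁ x • v₁ - φ₂ x • v₂) = 0 := by
      rw [map_sub, map_sub, map_smul, map_smul, hφ₂v₁, hφ₂v₂, smul_eq_mul, smul_eq_mul]; ring
    have hy : x - φ₁ x • v₁ - φ₂ x • v₂ ∈ N :=
      Submodule.mem_inf.2 ⟨LinearMap.mem_ker.2 k1, LinearMap.mem_ker.2 k2⟩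
    have hyx : x = φ₁ x • v₁ + φ₂ x • v₂ + (x - φ₁ x • v₁ - φ₂ x • v₂) := by ring_nf
    rw [hyx]
    refine Submodule.add_mem _ (Submodule.add_mem _ ?_ ?_) ?_
    · exact Submodule.smul_mem _ _ (Submodule.subset_span ⟨Sum.inl 0, rfl⟩)
    · exact Submodule.smul_mem _ _ (Submodule.subset_span ⟨Sum.inl 1, rfl⟩)
    · rw [← hspanN] at hy
      refine Submodule.span_mono ?_ hy
      rintro - ⟨j, rfl⟩
      exact ⟨Sum.inr j, rfl⟩
  set b' : Module.Basis (Fin 2 ⊕ Module.Free.ChooseBasisIndex ℤ N) ℤ (Fin g → ℤ) :=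
    Module.Basis.mk hli hsp with hb'def
  set e := b'.indexEquiv (Pi.basisFun ℤ (Fin g)) with hedef
  refine ⟨b'.reindex e, e (Sum.inl 0), e (Sum.inl 1), ?_, ?_, ?_, ?_⟩
  · exact fun h => (by simp : (Sum.inl 0 : Fin 2 ⊕ _) ≠ Sum.inl 1) (e.injective h)
  · rw [Module.Basis.reindex_apply, Equiv.symm_apply_apply, hb'def, Module.Basis.mk_apply]; rfl
  · rw [Module.Basis.reindex_apply, Equiv.symm_apply_apply, hb'def, Module.Basis.mk_apply]; rfl
  · intro w hw hw1 hw2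
    have hwN : w ∈ N := ⟨LinearMap.mem_ker.2 (hM1 w hw hw1), LinearMap.mem_ker.2 (hM2 w hw hw2)⟩
    rw [← hspanN] at hwN
    refine Submodule.span_mono ?_ hwN
    rintro - ⟨j, rfl⟩
    refine ⟨e (Sum.inr j), ⟨?_, ?_⟩, ?_⟩
    · exact fun h => (by simp : (Sum.inr j : Fin 2 ⊕ _) ≠ Sum.inl 0) (e.injective h)
    · exact fun h => (by simp : (Sum.inr j : Fin 2 ⊕ _) ≠ Sum.inl 1) (e.injective h)
    · rw [Module.Basis.reindex_apply, Equiv.symm_apply_apply, hb'def, Module.Basis.mk_apply]; rfl
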